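/- arXiv:1910.11737 — 3 statements merged into one kernel-verified Lean document; each statement's English description precedes it below -/
import Mathlib

section
/- On the player set N = {0,1,...,m} (m ≥ 1), consider the game where v(S) = p if S contains {2,...,m} and at least one of {0,1} (players 0 and 1 are identical substitutes for task 1). Then the Shapley value of player 0 equals p/((m+1)m), the same holds for player 1, and the Shapley value of each player j ∈ {2,...,m} is p/m + p/((m+1)m). -/
/-- The Shapley value of player `i` in the cooperative game `(N, v)`. -/
noncomputable def shapley {α : Type*} [DecidableEq α] (N : Finset α) (v : Finset α → ℝ) (i : α) : ℝ :=
  ∑ S ∈ (N.erase i).powerset,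
    ((S.card.factorial * (N.card - S.card - 1).factorial : ℕ) : ℝ) / (N.card.factorial : ℝ) *
      (v (insert i S) - v S)

lemma fact_ratio1 (m : ℕ) (hm : 1 ≤ m) :
    (((m-1).factorial * ((m+1) - (m-1) - 1).factorial : ℕ) : ℝ) / ((m+1).factorial : ℝ)
      = 1 / ((m+1)*m) := by
  have h1 : (m+1) - (m-1) - 1 = 1 := by omega
  have h2 : m - 1 + 1 = m := by omega
  have hfac : (m+1).factorial = (m+1) * (m * (m-1).factorial) := by
    conv_lhs => rw [Nat.factorial_succ, ← h2, Nat.factorial_succ, h2]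
  rw [h1, hfac]
  have hne : ((m-1).factorial : ℝ) ≠ 0 := by positivity
  have hm0 : (m : ℝ) ≠ 0 := by positivity
  push_cast
  field_simp
  ring

lemma fact_ratio2 (m : ℕ) :
    ((m.factorial * ((m+1) - m - 1).factorial : ℕ) : ℝ) / ((m+1).factorial : ℝ)
      = 1 / (m+1) := by
  have h1 : (m+1) - m - 1 = 0 := by omega
  rw [h1, Nat.factorial_succ]
  have hne : (m.factorial : ℝ) ≠ 0 := by positivity
  push_cast
  field_simp
  ring

section aux
variable (m : ℕ) (p : ℝ)

noncomputable def myv : Finset (Fin (m+1)) → ℝ :=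
  fun S => if (Finset.univ.erase (0 : Fin (m + 1))).erase 1 ⊆ S ∧
      ((0 : Fin (m + 1)) ∈ S ∨ (1 : Fin (m + 1)) ∈ S) then p else 0

variable (hm : 1 ≤ m)
include hm

lemma h01 : (0 : Fin (m+1)) ≠ 1 := by
  have : (1 : Fin (m+1)).val = 1 := by
    rw [Fin.val_one']; exact Nat.mod_eq_of_lt (by omega)
  intro h
  rw [← h] at this
  simp at this


set_option linter.unusedSectionVars false in
lemma mem_T (x : Fin (m+1)) :
    x ∈ (Finset.univ.erase (0 : Fin (m + 1))).erase 1 ↔ x ≠ 1 ∧ x ≠ 0 := by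
  simp [Finset.mem_erase]

lemma card_T : ((Finset.univ.erase (0 : Fin (m + 1))).erase 1).card = m - 1 := by
  rw [Finset.card_erase_of_mem, Finset.card_erase_of_mem (Finset.mem_univ _)]
  · simp
  · exact Finset.mem_erase.mpr ⟨(h01 m hm).symm, Finset.mem_univ _⟩

end aux

section main
variable (m : ℕ) (p : ℝ) (hm : 1 ≤ m)
include hm

lemma shapley0 : shapley Finset.univ (myv m p) 0 = p / ((m+1)*m) := by
  unfold shapley
  set T := (Finset.univ.erase (0 : Fin (m+1))).erase 1 with hT
  have hTsub : T ⊆ Finset.univ.erase 0 := Finset.erase_subset _ _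
  have h0T : (0 : Fin (m+1)) ∉ T := fun h => ((mem_T m hm 0).mp h).2 rfl
  have h1T : (1 : Fin (m+1)) ∉ T := fun h => ((mem_T m hm 1).mp h).1 rfl
  rw [Finset.sum_eq_single_of_mem T (Finset.mem_powerset.mpr hTsub) ?_]
  · have hvp : myv m p (insert 0 T) = p := by
      unfold myv
      rw [if_pos ⟨Finset.subset_insert _ _, Or.inl (Finset.mem_insert_self _ _)⟩]
    have hv0 : myv m p T = 0 := by
      unfold myv
      rw [if_neg]
      rintro ⟨-, h | h⟩
      · exact h0T h
      · exact h1T h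
    have hcards : (Finset.univ : Finset (Fin (m+1))).card = m + 1 := by simp
    have hcT : T.card = m - 1 := card_T m hm
    rw [hvp, hv0, hcards, hcT, fact_ratio1 m hm]
    ring
  · intro S hS hne
    have hSsub : S ⊆ Finset.univ.erase 0 := Finset.mem_powerset.mp hS
    suffices h : myv m p (insert 0 S) = myv m p S by rw [h]; ring
    by_cases hTS : T ⊆ S
    · have h1S : (1 : Fin (m+1)) ∈ S := by
        by_contra h1
        apply hne
        refine Finset.Subset.antisymm (fun x hx => ?_) hTS
        rw [mem_T m hm]
        exact ⟨fun e => h1 (e ▸ hx), fun e => (Finset.mem_erase.mp (hSsub hx)).1 e⟩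
      unfold myv
      rw [if_pos ⟨hTS.trans (Finset.subset_insert _ _), Or.inl (Finset.mem_insert_self _ _)⟩,
        if_pos ⟨hTS, Or.inr h1S⟩]
    · have hni : ¬ T ⊆ insert 0 S := by
        intro h
        refine hTS (fun x hx => ?_)
        rcases Finset.mem_insert.mp (h hx) with h0 | hS'
        · exact absurd h0 ((mem_T m hm x).mp hx).2
        · exact hS'
      unfold myv
      rw [if_neg (fun hc => hni hc.1), if_neg (fun hc => hTS hc.1)]

lemma shapley1 : shapley Finset.univ (myv m p) 1 = p / ((m+1)*m) := by
  unfold shapley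
  set T := (Finset.univ.erase (0 : Fin (m+1))).erase 1 with hT
  have hTsub : T ⊆ Finset.univ.erase 1 := by
    rw [hT, Finset.erase_right_comm]
    exact Finset.erase_subset _ _
  have h0T : (0 : Fin (m+1)) ∉ T := fun h => ((mem_T m hm 0).mp h).2 rfl
  have h1T : (1 : Fin (m+1)) ∉ T := fun h => ((mem_T m hm 1).mp h).1 rfl
  rw [Finset.sum_eq_single_of_mem T (Finset.mem_powerset.mpr hTsub) ?_]
  · have hvp : myv m p (insert 1 T) = p := by
      unfold myv
      rw [if_pos ⟨Finset.subset_insert _ _, Or.inr (Finset.mem_insert_self _ _)⟩]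
    have hv0 : myv m p T = 0 := by
      unfold myv
      rw [if_neg]
      rintro ⟨-, h | h⟩
      · exact h0T h
      · exact h1T h
    have hcards : (Finset.univ : Finset (Fin (m+1))).card = m + 1 := by simp
    have hcT : T.card = m - 1 := card_T m hm
    rw [hvp, hv0, hcards, hcT, fact_ratio1 m hm]
    ring
  · intro S hS hne
    have hSsub : S ⊆ Finset.univ.erase 1 := Finset.mem_powerset.mp hS
    suffices h : myv m p (insert 1 S) = myv m p S by rw [h]; ring
    by_cases hTS : T ⊆ S
    · have h0S : (0 : Fin (m+1)) ∈ S := by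
        by_contra h0
        apply hne
        refine Finset.Subset.antisymm (fun x hx => ?_) hTS
        rw [mem_T m hm]
        exact ⟨fun e => (Finset.mem_erase.mp (hSsub hx)).1 e, fun e => h0 (e ▸ hx)⟩
      unfold myv
      rw [if_pos ⟨hTS.trans (Finset.subset_insert _ _), Or.inr (Finset.mem_insert_self _ _)⟩,
        if_pos ⟨hTS, Or.inl h0S⟩]
    · have hni : ¬ T ⊆ insert 1 S := by
        intro h
        refine hTS (fun x hx => ?_)
        rcases Finset.mem_insert.mp (h hx) with h0 | hS'
        · exact absurd h0 ((mem_T m hm x).mp hx).1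
        · exact hS'
      unfold myv
      rw [if_neg (fun hc => hni hc.1), if_neg (fun hc => hTS hc.1)]

lemma shapleyj (j : Fin (m+1)) (hj0 : j ≠ 0) (hj1 : j ≠ 1) :
    shapley Finset.univ (myv m p) j = p / m + p / ((m+1)*m) := by
  have hm2 : 2 ≤ m := by
    by_contra h
    have hm1 : m = 1 := by omega
    subst hm1
    have hlt := j.isLt
    have h0 : j.val ≠ 0 := fun h => hj0 (Fin.ext h)
    have h1 : j.val ≠ 1 := by simpa [Fin.ext_iff, Fin.val_one'] using hj1
    omega
  unfold shapley
  set T := (Finset.univ.erase (0 : Fin (m+1))).erase 1 with hT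
  have h0T : (0 : Fin (m+1)) ∉ T := fun h => ((mem_T m hm 0).mp h).2 rfl
  have h1T : (1 : Fin (m+1)) ∉ T := fun h => ((mem_T m hm 1).mp h).1 rfl
  have hjT : j ∈ T := (mem_T m hm j).mpr ⟨hj1, hj0⟩
  set E := T.erase j with hE
  set A := insert (0 : Fin (m+1)) E with hA
  set B := insert (1 : Fin (m+1)) E with hB
  set C := insert (0 : Fin (m+1)) (insert 1 E) with hC
  have hjE : j ∉ E := Finset.notMem_erase _ _
  have h0E : (0 : Fin (m+1)) ∉ E := fun h => h0T (Finset.mem_of_mem_erase h)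
  have h1E : (1 : Fin (m+1)) ∉ E := fun h => h1T (Finset.mem_of_mem_erase h)
  have h01 : (0 : Fin (m+1)) ≠ 1 := h01 m hm
  have h0B : (0 : Fin (m+1)) ∉ B := by
    rw [hB, Finset.mem_insert]; rintro (h | h); exacts [h01 h, h0E h]
  have h1A : (1 : Fin (m+1)) ∉ A := by
    rw [hA, Finset.mem_insert]; rintro (h | h); exacts [h01 h.symm, h1E h]
  have hjA : j ∉ A := by
    rw [hA, Finset.mem_insert]; rintro (h | h); exacts [hj0 h, hjE h]
  have hjB : j ∉ B := by
    rw [hB, Finset.mem_insert]; rintro (h | h); exacts [hj1 h, hjE h]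
  have hjC : j ∉ C := by
    rw [hC, Finset.mem_insert, Finset.mem_insert]
    rintro (h | h | h); exacts [hj0 h, hj1 h, hjE h]
  have hAB : A ≠ B := fun h => h0B (h ▸ Finset.mem_insert_self _ _)
  have hAC : A ≠ C := fun h => h1A (h ▸ Finset.mem_insert_of_mem (Finset.mem_insert_self _ _))
  have hBC : B ≠ C := fun h => h0B (h ▸ Finset.mem_insert_self _ _)
  -- cards
  have hcE : E.card = m - 2 := by
    rw [hE, Finset.card_erase_of_mem hjT, card_T m hm]
    omega
  have hcA : A.card = m - 1 := by
    rw [hA, Finset.card_insert_of_notMem h0E, hcE]; omega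
  have hcB : B.card = m - 1 := by
    rw [hB, Finset.card_insert_of_notMem h1E, hcE]; omega
  have hcC : C.card = m := by
    rw [hC, Finset.card_insert_of_notMem h0B,
      Finset.card_insert_of_notMem h1E, hcE]; omega
  -- T ⊆ insert j S whenever E ⊆ S
  have hTins : ∀ S : Finset (Fin (m+1)), E ⊆ S → T ⊆ insert j S := by
    intro S hES x hx
    by_cases hxj : x = j
    · exact hxj ▸ Finset.mem_insert_self _ _
    · exact Finset.mem_insert_of_mem (hES (Finset.mem_erase.mpr ⟨hxj, hx⟩))
  have hEA : E ⊆ A := Finset.subset_insert _ _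
  have hEB : E ⊆ B := Finset.subset_insert _ _
  have hEC : E ⊆ C := (Finset.subset_insert _ _).trans (Finset.subset_insert _ _)
  -- subsets of univ.erase j
  have hsubu : ∀ S : Finset (Fin (m+1)), j ∉ S → S ⊆ Finset.univ.erase j := by
    intro S hjS x hx
    exact Finset.mem_erase.mpr ⟨fun e => hjS (e ▸ hx), Finset.mem_univ _⟩
  have hsub : ({A, B, C} : Finset (Finset (Fin (m+1)))) ⊆ (Finset.univ.erase j).powerset := by
    intro S hS
    simp only [Finset.mem_insert, Finset.mem_singleton] at hS
    rcases hS with rfl | rfl | rfl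
    · exact Finset.mem_powerset.mpr (hsubu _ hjA)
    · exact Finset.mem_powerset.mpr (hsubu _ hjB)
    · exact Finset.mem_powerset.mpr (hsubu _ hjC)
  rw [← Finset.sum_subset hsub ?_]
  · have hAnot : A ∉ ({B, C} : Finset (Finset (Fin (m+1)))) := by simp [hAB, hAC]
    have hBnot : B ∉ ({C} : Finset (Finset (Fin (m+1)))) := by simp [hBC]
    rw [Finset.sum_insert hAnot, Finset.sum_insert hBnot, Finset.sum_singleton]
    have hvA : myv m p (insert j A) = p := by
      unfold myv
      rw [if_pos ⟨hTins A hEA, Or.inl (Finset.mem_insert_of_mem (Finset.mem_insert_self _ _))⟩]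
    have hvB : myv m p (insert j B) = p := by
      unfold myv
      rw [if_pos ⟨hTins B hEB, Or.inr (Finset.mem_insert_of_mem (Finset.mem_insert_self _ _))⟩]
    have hvC : myv m p (insert j C) = p := by
      unfold myv
      rw [if_pos ⟨hTins C hEC, Or.inl (Finset.mem_insert_of_mem (Finset.mem_insert_self _ _))⟩]
    have hv0 : ∀ S : Finset (Fin (m+1)), j ∉ S → myv m p S = 0 := by
      intro S hjS
      unfold myv
      rw [if_neg]
      rintro ⟨hTS, -⟩
      exact hjS (hTS hjT)
    have hcards : (Finset.univ : Finset (Fin (m+1))).card = m + 1 := by simp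
    rw [hvA, hvB, hvC, hv0 A hjA, hv0 B hjB, hv0 C hjC, hcards, hcA, hcB, hcC,
      fact_ratio1 m hm, fact_ratio2 m]
    have hm0 : (m : ℝ) ≠ 0 := Nat.cast_ne_zero.mpr (by omega)
    have hm1 : (m : ℝ) + 1 ≠ 0 := by positivity
    field_simp
    ring
  · intro S hS hnotin
    have hSsub : S ⊆ Finset.univ.erase j := Finset.mem_powerset.mp hS
    have hjS : j ∉ S := fun h => (Finset.mem_erase.mp (hSsub h)).1 rfl
    suffices h : myv m p (insert j S) = myv m p S by rw [h]; ring
    by_cases hES : E ⊆ S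
    · by_cases h01S : (0 : Fin (m+1)) ∈ S ∨ (1 : Fin (m+1)) ∈ S
      · exfalso
        apply hnotin
        simp only [Finset.mem_insert, Finset.mem_singleton]
        have hSsup : ∀ x ∈ S, x = 0 ∨ x = 1 ∨ x ∈ E := by
          intro x hx
          by_cases hx0 : x = 0
          · exact Or.inl hx0
          by_cases hx1 : x = 1
          · exact Or.inr (Or.inl hx1)
          refine Or.inr (Or.inr (Finset.mem_erase.mpr ⟨fun e => hjS (e ▸ hx), ?_⟩))
          exact (mem_T m hm x).mpr ⟨hx1, hx0⟩
        by_cases h0 : (0 : Fin (m+1)) ∈ S <;> by_cases h1 : (1 : Fin (m+1)) ∈ S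
        · refine Or.inr (Or.inr (Finset.Subset.antisymm (fun x hx => ?_) ?_))
          · rcases hSsup x hx with rfl | rfl | hxE
            · exact Finset.mem_insert_self _ _
            · exact Finset.mem_insert_of_mem (Finset.mem_insert_self _ _)
            · exact Finset.mem_insert_of_mem (Finset.mem_insert_of_mem hxE)
          · rw [hC]
            exact Finset.insert_subset h0 (Finset.insert_subset h1 hES)
        · refine Or.inl (Finset.Subset.antisymm (fun x hx => ?_) ?_)
          · rcases hSsup x hx with rfl | rfl | hxE
            · exact Finset.mem_insert_self _ _
            · exact absurd hx h1
            · exact Finset.mem_insert_of_mem hxE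
          · rw [hA]
            exact Finset.insert_subset h0 hES
        · refine Or.inr (Or.inl (Finset.Subset.antisymm (fun x hx => ?_) ?_))
          · rcases hSsup x hx with rfl | rfl | hxE
            · exact absurd hx h0
            · exact Finset.mem_insert_self _ _
            · exact Finset.mem_insert_of_mem hxE
          · rw [hB]
            exact Finset.insert_subset h1 hES
        · exact absurd h01S (by simp [h0, h1])
      · push_neg at h01S
        unfold myv
        rw [if_neg, if_neg]
        · rintro ⟨-, h | h⟩
          exacts [h01S.1 h, h01S.2 h]
        · rintro ⟨-, h | h⟩
          · rcases Finset.mem_insert.mp h with e | e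
            exacts [hj0 e.symm, h01S.1 e]
          · rcases Finset.mem_insert.mp h with e | e
            exacts [hj1 e.symm, h01S.2 e]
    · unfold myv
      rw [if_neg, if_neg]
      · rintro ⟨hTS, -⟩
        exact hES ((Finset.erase_subset _ _).trans hTS)
      · rintro ⟨hTS, -⟩
        refine hES (fun x hx => ?_)
        have hxT : x ∈ T := Finset.mem_of_mem_erase hx
        rcases Finset.mem_insert.mp (hTS hxT) with e | e
        · exact absurd e (Finset.mem_erase.mp hx).1
        · exact e

end main

/-- On players `{0,1,…,m}`, where a coalition is worth `p` iff it contains `{2,…,m}` and at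
least one of the identical substitutes `0,1`: players `0` and `1` each get Shapley value
`p/((m+1)m)`, and every player `j ∈ {2,…,m}` gets `p/m + p/((m+1)m)`. -/
theorem shapley_two_identical_players (m : ℕ) (hm : 1 ≤ m) (p : ℝ) :
    let v : Finset (Fin (m + 1)) → ℝ :=
      fun S => if (Finset.univ.erase (0 : Fin (m + 1))).erase 1 ⊆ S ∧
                  ((0 : Fin (m + 1)) ∈ S ∨ (1 : Fin (m + 1)) ∈ S) then p else 0
    shapley Finset.univ v 0 = p / ((m + 1) * m) ∧
    shapley Finset.univ v 1 = p / ((m + 1) * m) ∧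
      ∀ j : Fin (m + 1), j ≠ 0 → j ≠ 1 →
        shapley Finset.univ v j = p / m + p / ((m + 1) * m) := by
  intro v
  exact ⟨shapley0 m p hm, shapley1 m p hm, fun j hj0 hj1 => shapleyj m p hm j hj0 hj1⟩
end

section
/- For m ≥ 1, k ≥ 1, the quantity Σ_{i=1}^{k} (i-1)!(m-1)!/(m+i-1)! · p equals the Shapley value of each non-duplicated task-player in the game with k identical players for one task: in the game on players {1,...,m-1} ∪ {j^1,...,j^k} where v(S) = p iff {1,...,m-1} ⊆ S and S ∩ {j^1,...,j^k} ≠ ∅, the Shapley value of each player l ∈ {1,...,m-1} equals p · Σ_{i=1}^{k} (i-1)!(m-1)!/(m+i-1)!. -/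
open Finset


theorem mySum_powerset_disjSum {α β M : Type*} [DecidableEq α] [DecidableEq β] [AddCommMonoid M]
    (C : Finset α) (D : Finset β) (f : Finset (α ⊕ β) → M) :
    ∑ S ∈ (C.disjSum D).powerset, f S
      = ∑ A ∈ C.powerset, ∑ B ∈ D.powerset, f (A.disjSum B) := by
  rw [← Finset.sum_product']
  refine Finset.sum_nbij' (fun S => (S.toLeft, S.toRight)) (fun P => P.1.disjSum P.2)
    ?_ ?_ ?_ ?_ ?_
  · intro S hS
    simp only [mem_powerset] at hS
    simp only [mem_product, mem_powerset]
    constructor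
    · intro x hx
      simp only [mem_toLeft] at hx
      have := hS hx
      simpa using this
    · intro x hx
      simp only [mem_toRight] at hx
      have := hS hx
      simpa using this
  · rintro ⟨A, B⟩ hP
    simp only [mem_product, mem_powerset] at hP
    simp only [mem_powerset]
    intro x hx
    rcases x with x | x
    · simp only [inl_mem_disjSum] at hx
      simpa using hP.1 hx
    · simp only [inr_mem_disjSum] at hx
      simpa using hP.2 hx
  · intro S _; exact Finset.toLeft_disjSum_toRight
  · rintro ⟨A, B⟩ _; simp
  · intro S _
    rw [Finset.toLeft_disjSum_toRight]

lemma lemA (q : ℕ) : ∀ k : ℕ,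
    ∑ r ∈ Finset.Icc 1 k, ((q + r).factorial : ℝ) / (r.factorial : ℝ)
      = (((q + 1 + k).factorial : ℝ) / (k.factorial : ℝ) - ((q + 1).factorial : ℝ)) / (q + 1) := by
  intro k
  induction k with
  | zero => simp
  | succ k ih =>
    rw [Finset.sum_Icc_succ_top (by omega : 1 ≤ k + 1), ih]
    have h1 : (q + 1 + (k + 1)).factorial = (q + 1 + (k + 1)) * (q + 1 + k).factorial := by
      rw [show q + 1 + (k + 1) = (q + 1 + k) + 1 by ring, Nat.factorial_succ]
    have h2 : (k + 1).factorial = (k + 1) * k.factorial := Nat.factorial_succ k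
    have h3 : (q + (k + 1)).factorial = (q + 1 + k).factorial := by
      congr 1; ring
    have hk : (k.factorial : ℝ) ≠ 0 := Nat.cast_ne_zero.2 (Nat.factorial_ne_zero k)
    have hk1 : ((k + 1).factorial : ℝ) ≠ 0 := Nat.cast_ne_zero.2 (Nat.factorial_ne_zero _)
    have hq1 : ((q : ℝ) + 1) ≠ 0 := by positivity
    rw [h3, h1, h2]
    push_cast
    field_simp
    ring

lemma lemB (q : ℕ) : ∀ k : ℕ,
    ∑ i ∈ Finset.range k, ((i.factorial : ℝ) * ((q + 1).factorial : ℝ)) / ((q + 2 + i).factorial : ℝ)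
      = (1 - ((k.factorial : ℝ) * ((q + 1).factorial : ℝ)) / ((q + 1 + k).factorial : ℝ)) / (q + 1) := by
  intro k
  induction k with
  | zero =>
    have : ((q + 1).factorial : ℝ) ≠ 0 := Nat.cast_ne_zero.2 (Nat.factorial_ne_zero _)
    simp [div_self this]
  | succ k ih =>
    rw [Finset.sum_range_succ, ih]
    have h1 : (q + 1 + (k + 1)).factorial = (q + 1 + (k + 1)) * (q + 1 + k).factorial := by
      rw [show q + 1 + (k + 1) = (q + 1 + k) + 1 by ring, Nat.factorial_succ]
    have h2 : (k + 1).factorial = (k + 1) * k.factorial := Nat.factorial_succ k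
    have h3 : (q + 2 + k).factorial = (q + 1 + (k + 1)).factorial := by congr 1; ring
    have hk : ((q+1+k).factorial : ℝ) ≠ 0 := Nat.cast_ne_zero.2 (Nat.factorial_ne_zero _)
    have hq1 : ((q : ℝ) + 1) ≠ 0 := by positivity
    have hq2 : ((q:ℝ) + 1 + (k+1)) ≠ 0 := by positivity
    rw [h3, h1, h2]
    push_cast
    field_simp
    ring

lemma mainId (q k : ℕ) :
    ∑ r ∈ Finset.Icc 1 k,
        ((k.choose r : ℝ) * ((q + r).factorial : ℝ) * (((k - r).factorial : ℝ))) / ((q + 1 + k).factorial : ℝ)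
      = ∑ i ∈ Finset.range k, ((i.factorial : ℝ) * ((q + 1).factorial : ℝ)) / ((q + 2 + i).factorial : ℝ) := by
  have hKf : (k.factorial : ℝ) ≠ 0 := Nat.cast_ne_zero.2 (Nat.factorial_ne_zero _)
  have hQK : ((q + 1 + k).factorial : ℝ) ≠ 0 := Nat.cast_ne_zero.2 (Nat.factorial_ne_zero _)
  have hQ1 : ((q : ℝ) + 1) ≠ 0 := by positivity
  have hQ1f : ((q + 1).factorial : ℝ) ≠ 0 := Nat.cast_ne_zero.2 (Nat.factorial_ne_zero _)
  have step : ∑ r ∈ Finset.Icc 1 k,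
        ((k.choose r : ℝ) * ((q + r).factorial : ℝ) * (((k - r).factorial : ℝ))) / ((q + 1 + k).factorial : ℝ)
      = ((k.factorial : ℝ) / ((q + 1 + k).factorial : ℝ)) *
          ∑ r ∈ Finset.Icc 1 k, ((q + r).factorial : ℝ) / (r.factorial : ℝ) := by
    rw [Finset.mul_sum]
    refine Finset.sum_congr rfl ?_
    intro r hr
    have hrk : r ≤ k := (Finset.mem_Icc.1 hr).2
    have hc := Nat.choose_mul_factorial_mul_factorial hrk
    have hcast : (k.choose r : ℝ) * (r.factorial : ℝ) * ((k - r).factorial : ℝ) = (k.factorial : ℝ) := by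
      exact_mod_cast congrArg (Nat.cast : ℕ → ℝ) hc
    have hrf : (r.factorial : ℝ) ≠ 0 := Nat.cast_ne_zero.2 (Nat.factorial_ne_zero _)
    field_simp
    linear_combination hcast
  rw [step, lemA, lemB]
  field_simp

/-- Game with `m-1` singleton task players (the `Sum.inl` players) and `k` identical players
`j^1,…,j^k` (the `Sum.inr` players) for the remaining task: a coalition is worth `p` iff it
contains all singleton players and at least one `j^i`.  Each singleton player `l` has Shapley
value `p · Σ_{i=1}^{k} (i-1)!(m-1)!/(m+i-1)!` (written below with the index shifted). -/
theorem shapley_singleton_player_with_k_duplicates (m k : ℕ) (hm : 2 ≤ m) (hk : 1 ≤ k)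
    (p : ℝ) :
    let v : Finset (Fin (m - 1) ⊕ Fin k) → ℝ :=
      fun S => if (∀ a : Fin (m - 1), Sum.inl a ∈ S) ∧ (∃ b : Fin k, Sum.inr b ∈ S)
               then p else 0
    ∀ l : Fin (m - 1),
      shapley Finset.univ v (Sum.inl l) =
        p * ∑ i ∈ Finset.range k,
          ((i.factorial * (m - 1).factorial : ℕ) : ℝ) / ((m + i).factorial : ℝ) := by
  intro v l
  unfold v
  clear v
  have hm1 : 1 ≤ m - 1 := by omega
  have hErase : (Finset.univ.erase (Sum.inl l) : Finset (Fin (m - 1) ⊕ Fin k))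
      = (Finset.univ.erase l).disjSum Finset.univ := by
    ext x
    rcases x with a | b <;> simp
  have hc0 : (Finset.univ.erase l : Finset (Fin (m - 1))).card = m - 2 := by
    rw [Finset.card_erase_of_mem (Finset.mem_univ l), Finset.card_univ, Fintype.card_fin]
    omega
  have hNcard : (Finset.univ : Finset (Fin (m - 1) ⊕ Fin k)).card = m - 1 + k := by
    simp [Finset.card_univ]
  rw [shapley, hErase, mySum_powerset_disjSum]
  have key : ∀ A ∈ (Finset.univ.erase l : Finset (Fin (m - 1))).powerset,
      ∀ B ∈ (Finset.univ : Finset (Fin k)).powerset,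
      (((A.disjSum B).card.factorial *
          ((Finset.univ : Finset (Fin (m - 1) ⊕ Fin k)).card - (A.disjSum B).card - 1).factorial : ℕ) : ℝ)
          / ((Finset.univ : Finset (Fin (m - 1) ⊕ Fin k)).card.factorial : ℝ) *
        ((if (∀ a : Fin (m - 1), Sum.inl a ∈ insert (Sum.inl l) (A.disjSum B)) ∧
            (∃ b : Fin k, Sum.inr b ∈ insert (Sum.inl l) (A.disjSum B)) then p else 0)
          - (if (∀ a : Fin (m - 1), Sum.inl a ∈ A.disjSum B) ∧
              (∃ b : Fin k, Sum.inr b ∈ A.disjSum B) then p else 0))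
      = if A = Finset.univ.erase l then
          ((((m - 2 + B.card).factorial * (k - B.card).factorial : ℕ)) : ℝ)
            / (((m - 1 + k).factorial : ℕ) : ℝ) * (if B.card ≠ 0 then p else 0)
        else 0 := by
    intro A hA B hB
    have hAsub : A ⊆ Finset.univ.erase l := Finset.mem_powerset.1 hA
    have hlA : l ∉ A := fun h => (Finset.mem_erase.1 (hAsub h)).1 rfl
    have hv0 : (if (∀ a : Fin (m - 1), Sum.inl a ∈ A.disjSum B) ∧
        (∃ b : Fin k, Sum.inr b ∈ A.disjSum B) then p else (0:ℝ)) = 0 := by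
      rw [if_neg]
      rintro ⟨h1, -⟩
      exact hlA (by simpa using h1 l)
    rw [hv0, sub_zero, hNcard, Finset.card_disjSum]
    by_cases hAe : A = Finset.univ.erase l
    · subst hAe
      rw [if_pos rfl, hc0]
      have hBk : B.card ≤ k := by
        simpa using Finset.card_le_card (Finset.mem_powerset.1 hB)
      have hsub : m - 1 + k - (m - 2 + B.card) - 1 = k - B.card := by omega
      rw [hsub]
      congr 1
      by_cases hBne : B.Nonempty
      · rw [if_pos, if_pos]
        · exact fun h => hBne.card_pos.ne' (by omega)
        constructor
        · intro a
          rcases eq_or_ne a l with rfl | hal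
          · exact Finset.mem_insert_self _ _
          · exact Finset.mem_insert_of_mem (by simp [hal])
        · obtain ⟨b, hb⟩ := hBne
          exact ⟨b, Finset.mem_insert_of_mem (by simp [hb])⟩
      · rw [if_neg, if_neg]
        · simpa [Finset.not_nonempty_iff_eq_empty.1 hBne] using hBne
        rintro ⟨-, b, hb⟩
        rcases Finset.mem_insert.1 hb with h | h
        · exact absurd h (by simp)
        · exact hBne ⟨b, by simpa using h⟩
    · rw [if_neg hAe]
      have hv1 : (if (∀ a : Fin (m - 1), Sum.inl a ∈ insert (Sum.inl l) (A.disjSum B)) ∧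
          (∃ b : Fin k, Sum.inr b ∈ insert (Sum.inl l) (A.disjSum B)) then p else (0:ℝ)) = 0 := by
        rw [if_neg]
        rintro ⟨h1, -⟩
        apply hAe
        apply Finset.Subset.antisymm hAsub
        intro a ha
        have hal : a ≠ l := (Finset.mem_erase.1 ha).1
        have := h1 a
        rcases Finset.mem_insert.1 this with h | h
        · exact absurd h (by simp [hal])
        · simpa using h
      rw [hv1, mul_zero]
  rw [Finset.sum_congr rfl fun A hA => Finset.sum_congr rfl fun B hB => key A hA B hB]
  have pull : ∀ A : Finset (Fin (m - 1)),
      (∑ B ∈ (Finset.univ : Finset (Fin k)).powerset,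
        if A = Finset.univ.erase l then
          ((((m - 2 + B.card).factorial * (k - B.card).factorial : ℕ)) : ℝ)
            / (((m - 1 + k).factorial : ℕ) : ℝ) * (if B.card ≠ 0 then p else 0)
        else 0)
      = if A = Finset.univ.erase l then
          (∑ B ∈ (Finset.univ : Finset (Fin k)).powerset,
            ((((m - 2 + B.card).factorial * (k - B.card).factorial : ℕ)) : ℝ)
              / (((m - 1 + k).factorial : ℕ) : ℝ) * (if B.card ≠ 0 then p else 0))
        else 0 := by
    intro A
    split <;> simp
  rw [Finset.sum_congr rfl fun A _ => pull A, Finset.sum_ite_eq']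
  rw [if_pos (Finset.mem_powerset_self _)]
  have hGoal : ∑ B ∈ (Finset.univ : Finset (Fin k)).powerset,
        ((((m - 2 + B.card).factorial * (k - B.card).factorial : ℕ)) : ℝ)
          / (((m - 1 + k).factorial : ℕ) : ℝ) * (if B.card ≠ 0 then p else 0)
      = ∑ j ∈ Finset.range (k + 1), (k.choose j) •
          (((((m - 2 + j).factorial * (k - j).factorial : ℕ)) : ℝ)
            / (((m - 1 + k).factorial : ℕ) : ℝ) * (if j ≠ 0 then p else 0)) := by
    rw [Finset.sum_powerset, Finset.card_univ, Fintype.card_fin]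
    refine Finset.sum_congr rfl fun j hj => ?_
    rw [Finset.sum_powersetCard j Finset.univ
      (fun n => ((((m - 2 + n).factorial * (k - n).factorial : ℕ)) : ℝ)
        / (((m - 1 + k).factorial : ℕ) : ℝ) * (if n ≠ 0 then p else 0)),
      Finset.card_univ, Fintype.card_fin]
  rw [hGoal]
  have h0 : Finset.range (k + 1) = insert 0 (Finset.Icc 1 k) := by
    ext x; simp; omega
  rw [h0, Finset.sum_insert (by simp)]
  have hz : (k.choose 0) • (((((m - 2 + 0).factorial * (k - 0).factorial : ℕ)) : ℝ)
      / (((m - 1 + k).factorial : ℕ) : ℝ) * (if (0:ℕ) ≠ 0 then p else 0)) = 0 := by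
    simp
  rw [hz, zero_add]
  calc ∑ j ∈ Finset.Icc 1 k, (k.choose j) •
          (((((m - 2 + j).factorial * (k - j).factorial : ℕ)) : ℝ)
            / (((m - 1 + k).factorial : ℕ) : ℝ) * (if j ≠ 0 then p else 0))
      = p * ∑ j ∈ Finset.Icc 1 k,
          ((k.choose j : ℝ) * ((m - 2 + j).factorial : ℝ) * (((k - j).factorial : ℝ)))
            / ((m - 2 + 1 + k).factorial : ℝ) := by
        rw [Finset.mul_sum]
        refine Finset.sum_congr rfl fun j hj => ?_
        have hj0 : j ≠ 0 := by have := (Finset.mem_Icc.1 hj).1; omega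
        rw [if_pos hj0, nsmul_eq_mul]
        have he : m - 1 + k = m - 2 + 1 + k := by omega
        rw [he]
        push_cast
        ring
    _ = p * ∑ i ∈ Finset.range k,
          ((i.factorial : ℝ) * (((m - 2) + 1).factorial : ℝ)) / (((m - 2) + 2 + i).factorial : ℝ) := by
        rw [mainId]
    _ = p * ∑ i ∈ Finset.range k,
          ((i.factorial * (m - 1).factorial : ℕ) : ℝ) / ((m + i).factorial : ℝ) := by
        congr 1
        refine Finset.sum_congr rfl fun i _ => ?_
        have h1 : m - 2 + 1 = m - 1 := by omega
        have h2 : m - 2 + 2 + i = m + i := by omega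
        rw [h1, h2]
        push_cast
        ring
end

section
/- In the game where player i and its identical copy i* can do task τ_i and there are m-1 other tasks each with one player (v(S) = p iff all m-1 other players are in S and S ∩ {i, i*} ≠ ∅), the Shapley value of i* (and of i) equals p/((m+1)m), and after adding further k-1 identical players for another task τ_j, the Shapley value of i* becomes p · Σ_{i=1}^{k} i!(m-1)!/(m+i)!. -/
theorem identI : ∀ k a b : ℕ, (a+b+1).factorial * ∑ j ∈ Finset.range (k+1),
    k.choose j * ((a+j).factorial * (b+k-j).factorial)
    = (a+b+k+1).factorial * (a.factorial * b.factorial) := by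
  intro k
  induction k with
  | zero => intro a b; simp
  | succ k ih =>
    intro a b
    have hM : ∑ j ∈ Finset.range (k+2),
          (k+1).choose j * ((a+j).factorial * (b+(k+1)-j).factorial)
        = (∑ j ∈ Finset.range (k+1),
            (k+1).choose (j+1) * ((a+(j+1)).factorial * (b+(k+1)-(j+1)).factorial))
          + (k+1).choose 0 * ((a+0).factorial * (b+(k+1)-0).factorial) :=
      Finset.sum_range_succ' _ (k+1)
    have hT : ∑ j ∈ Finset.range (k+2),
          k.choose j * ((a+j).factorial * (b+(k+1)-j).factorial)
        = (∑ j ∈ Finset.range (k+1),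
            k.choose (j+1) * ((a+(j+1)).factorial * (b+(k+1)-(j+1)).factorial))
          + k.choose 0 * ((a+0).factorial * (b+(k+1)-0).factorial) :=
      Finset.sum_range_succ' _ (k+1)
    have hp : ∀ j ∈ Finset.range (k+1),
        (k+1).choose (j+1) * ((a+(j+1)).factorial * (b+(k+1)-(j+1)).factorial)
        = k.choose j * ((a+1+j).factorial * (b+k-j).factorial)
          + k.choose (j+1) * ((a+(j+1)).factorial * (b+(k+1)-(j+1)).factorial) := by
      intro j hj
      have h2 : a+(j+1) = a+1+j := by omega
      have h3 : b+(k+1)-(j+1) = b+k-j := by omega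
      rw [Nat.choose_succ_succ k j, add_mul, h2, h3]
    have hM2 : ∑ j ∈ Finset.range (k+2),
          (k+1).choose j * ((a+j).factorial * (b+(k+1)-j).factorial)
        = (∑ j ∈ Finset.range (k+1), k.choose j * ((a+1+j).factorial * (b+k-j).factorial))
          + ∑ j ∈ Finset.range (k+2),
              k.choose j * ((a+j).factorial * (b+(k+1)-j).factorial) := by
      rw [hM, Finset.sum_congr rfl hp, Finset.sum_add_distrib, hT, add_assoc]
      congr 2
      simp
    have hT2 : ∑ j ∈ Finset.range (k+2),
          k.choose j * ((a+j).factorial * (b+(k+1)-j).factorial)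
        = ∑ j ∈ Finset.range (k+1),
            k.choose j * ((a+j).factorial * ((b+1)+k-j).factorial) := by
      rw [Finset.sum_range_succ]
      simp only [Nat.choose_succ_self, zero_mul, add_zero]
      apply Finset.sum_congr rfl
      intro j hj
      congr 3
      omega
    rw [hM2, hT2, Nat.mul_add]
    have iha := ih (a+1) b
    have ihb := ih a (b+1)
    have fab : (a+b+2).factorial = (a+b+2) * (a+b+1).factorial := Nat.factorial_succ (a+b+1)
    have ea : a + 1 + b + 1 = a + b + 2 := by omega
    have eb : a + (b+1) + 1 = a + b + 2 := by omega
    have ec : a + 1 + b + k + 1 = a + b + k + 2 := by omega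
    have ed : a + (b+1) + k + 1 = a + b + k + 2 := by omega
    have ee : a + b + (k+1) + 1 = a + b + k + 2 := by omega
    rw [ea, ec, fab, Nat.factorial_succ a] at iha
    rw [eb, ed, fab, Nat.factorial_succ b] at ihb
    rw [ee]
    apply Nat.eq_of_mul_eq_mul_left (show 0 < a+b+2 by omega)
    zify at iha ihb ⊢
    linear_combination iha + ihb

theorem telesc (a : ℕ) : ∀ k : ℕ,
    ∑ l ∈ Finset.range k, ((l+1).factorial * (a+1).factorial : ℝ) / ((a+l+3).factorial : ℝ)
    = (a.factorial : ℝ) / ((a+2).factorial : ℝ)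
      - ((k+1).factorial : ℝ) * (a.factorial : ℝ) / ((a+k+2).factorial : ℝ) := by
  intro k
  induction k with
  | zero => simp
  | succ k ih =>
    rw [Finset.sum_range_succ, ih]
    have h1 : (a+(k+1)+2) = (a+k+3) := by omega
    have h2 : ((a+k+3).factorial : ℝ) = (a+k+3) * ((a+k+2).factorial : ℝ) := by
      rw [show a+k+3 = (a+k+2)+1 by omega, Nat.factorial_succ]; push_cast; ring
    have h3 : ((k+2).factorial : ℝ) = (k+2) * ((k+1).factorial : ℝ) := by
      rw [Nat.factorial_succ]; push_cast; ring
    have h4 : ((a+1).factorial : ℝ) = (a+1) * (a.factorial : ℝ) := by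
      rw [Nat.factorial_succ]; push_cast; ring
    rw [h1, show k+1+1 = k+2 by omega, h2, h3, h4]
    have hne1 : ((a+k+2).factorial : ℝ) ≠ 0 := Nat.cast_ne_zero.2 (Nat.factorial_ne_zero _)
    have hne2 : ((a+2).factorial : ℝ) ≠ 0 := Nat.cast_ne_zero.2 (Nat.factorial_ne_zero _)
    have hne3 : ((a:ℝ)+k+3) ≠ 0 := by positivity
    field_simp
    ring

lemma part1 (a : ℕ) (p : ℝ) (b : Fin 2) :
    shapley (Finset.univ : Finset (Fin (a+1) ⊕ Fin 2))
      (fun S => if (∀ x : Fin (a+1), Sum.inl x ∈ S) ∧ (∃ c : Fin 2, Sum.inr c ∈ S) then p else 0)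
      (Sum.inr b) = p / (((a:ℝ)+3) * ((a:ℝ)+2)) := by
  classical
  set v : Finset (Fin (a+1) ⊕ Fin 2) → ℝ :=
    fun S => if (∀ x : Fin (a+1), Sum.inl x ∈ S) ∧ (∃ c : Fin 2, Sum.inr c ∈ S) then p else 0 with hv
  set S₀ : Finset (Fin (a+1) ⊕ Fin 2) := (Finset.univ : Finset (Fin (a+1))).image Sum.inl with hS₀
  have hmemS₀ : ∀ x, x ∈ S₀ ↔ ∃ y, Sum.inl y = x := by
    intro x; simp [hS₀]
  have hmem : S₀ ∈ ((Finset.univ : Finset (Fin (a+1) ⊕ Fin 2)).erase (Sum.inr b)).powerset := by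
    rw [Finset.mem_powerset]
    intro x hx
    rw [hmemS₀] at hx
    obtain ⟨y, rfl⟩ := hx
    simp
  rw [shapley]
  rw [Finset.sum_eq_single_of_mem S₀ hmem]
  · -- value at S₀
    have hins : v (insert (Sum.inr b) S₀) = p := by
      rw [hv]
      simp only [if_pos]
      rw [if_pos]
      constructor
      · intro x; apply Finset.mem_insert_of_mem; rw [hmemS₀]; exact ⟨x, rfl⟩
      · exact ⟨b, Finset.mem_insert_self _ _⟩
    have hS0v : v S₀ = 0 := by
      simp only [hv]
      rw [if_neg]
      rintro ⟨-, c, hc⟩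
      rw [hmemS₀] at hc
      obtain ⟨y, hy⟩ := hc
      exact Sum.inl_ne_inr hy
    rw [hins, hS0v]
    have hcard : S₀.card = a + 1 := by
      rw [hS₀, Finset.card_image_of_injective _ Sum.inl_injective, Finset.card_univ,
        Fintype.card_fin]
    have hN : (Finset.univ : Finset (Fin (a+1) ⊕ Fin 2)).card = a + 3 := by
      rw [Finset.card_univ, Fintype.card_sum, Fintype.card_fin, Fintype.card_fin]
    rw [hcard, hN]
    have h1 : a + 3 - (a+1) - 1 = 1 := by omega
    rw [h1]
    have h2 : (a+3).factorial = (a+3) * ((a+2) * (a+1).factorial) := by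
      rw [show a+3 = (a+2)+1 by omega, Nat.factorial_succ, show a+2 = (a+1)+1 by omega,
        Nat.factorial_succ]
    rw [h2]
    have hne : ((a+1).factorial : ℝ) ≠ 0 := Nat.cast_ne_zero.2 (Nat.factorial_ne_zero _)
    push_cast
    field_simp
    ring
  · -- other terms vanish
    intro S hS hne
    have hsub := Finset.mem_powerset.1 hS
    have hvv : v (insert (Sum.inr b) S) = v S := by
      by_cases hall : ∀ x : Fin (a+1), Sum.inl x ∈ S
      · have hb' : Sum.inr (b+1) ∈ S := by
          by_contra hn
          apply hne
          ext x
          rw [hmemS₀]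
          cases x with
          | inl y => exact ⟨fun _ => ⟨y, rfl⟩, fun _ => hall y⟩
          | inr c =>
            constructor
            · intro hc
              exfalso
              have hcb : c ≠ b := by
                intro h; subst h
                exact (Finset.mem_erase.1 (hsub hc)).1 rfl
              have : c = b + 1 := (by decide : ∀ b' c' : Fin 2, c' ≠ b' → c' = b' + 1) b c hcb
              subst this; exact hn hc
            · rintro ⟨y, hy⟩; exact absurd hy (Sum.inl_ne_inr)
        simp only [hv]
        rw [if_pos, if_pos]
        · exact ⟨hall, ⟨b+1, hb'⟩⟩
        · exact ⟨fun x => Finset.mem_insert_of_mem (hall x),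
            ⟨b+1, Finset.mem_insert_of_mem hb'⟩⟩
      · simp only [hv]
        rw [if_neg, if_neg]
        · exact fun h => hall h.1
        · rintro ⟨h1, -⟩
          apply hall
          intro x
          rcases Finset.mem_insert.1 (h1 x) with h | h
          · exact absurd h (Sum.inl_ne_inr)
          · exact h
    rw [hvv]
    simp

lemma part2 (a k : ℕ) (hk : 1 ≤ k) (p : ℝ) :
    shapley (Finset.univ : Finset (Fin a ⊕ (Fin 2 ⊕ Fin k)))
      (fun S => if (∀ x : Fin a, Sum.inl x ∈ S) ∧ (∃ b : Fin 2, Sum.inr (Sum.inl b) ∈ S)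
            ∧ (∃ c : Fin k, Sum.inr (Sum.inr c) ∈ S) then p else 0)
      (Sum.inr (Sum.inl 1))
    = p * ∑ l ∈ Finset.range k,
        (((l+1).factorial * (a+1).factorial : ℕ) : ℝ) / ((a+2+l+1).factorial : ℝ) := by
  classical
  set α := Fin a ⊕ (Fin 2 ⊕ Fin k) with hα
  set v : Finset α → ℝ :=
    fun S => if (∀ x : Fin a, Sum.inl x ∈ S) ∧ (∃ b : Fin 2, Sum.inr (Sum.inl b) ∈ S)
            ∧ (∃ c : Fin k, Sum.inr (Sum.inr c) ∈ S) then p else 0 with hv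
  set istar : α := Sum.inr (Sum.inl 1) with histar
  set A : Finset α := (Finset.univ : Finset (Fin a)).image Sum.inl with hA
  set g : Finset (Fin k) → Finset α :=
    fun T => A ∪ T.image (fun c => Sum.inr (Sum.inr c)) with hg
  set cond : Finset α → Prop :=
    fun S => (∀ x : Fin a, Sum.inl x ∈ S) ∧ (Sum.inr (Sum.inl 0) ∉ S)
      ∧ (∃ c : Fin k, Sum.inr (Sum.inr c) ∈ S) with hcond
  have hNcard : (Finset.univ : Finset α).card = a + k + 2 := by
    rw [Finset.card_univ]
    show Fintype.card (Fin a ⊕ Fin 2 ⊕ Fin k) = a + k + 2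
    simp [Fintype.card_sum]
    omega
  -- Step 1: rewrite each summand with an if
  have step1 : ∀ S ∈ ((Finset.univ : Finset α).erase istar).powerset,
      ((S.card.factorial * ((Finset.univ : Finset α).card - S.card - 1).factorial : ℕ) : ℝ)
          / ((Finset.univ : Finset α).card.factorial : ℝ) * (v (insert istar S) - v S)
      = if cond S then
          ((S.card.factorial * ((Finset.univ : Finset α).card - S.card - 1).factorial : ℕ) : ℝ)
            / ((Finset.univ : Finset α).card.factorial : ℝ) * p
        else 0 := by
    intro S hS
    have hsub := Finset.mem_powerset.1 hS
    have histarS : istar ∉ S := fun h => (Finset.mem_erase.1 (hsub h)).1 rfl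
    have hdiff : v (insert istar S) - v S = if cond S then p else 0 := by
      by_cases h1 : ∀ x : Fin a, Sum.inl x ∈ S
      · by_cases h3 : ∃ c : Fin k, Sum.inr (Sum.inr c) ∈ S
        · have hins : v (insert istar S) = p := by
            simp only [hv]
            rw [if_pos]
            refine ⟨fun x => Finset.mem_insert_of_mem (h1 x), ⟨1, Finset.mem_insert_self _ _⟩,
              ?_⟩
            obtain ⟨c, hc⟩ := h3
            exact ⟨c, Finset.mem_insert_of_mem hc⟩
          by_cases h2 : Sum.inr (Sum.inl 0) ∈ S
          · have hvS : v S = p := by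
              simp only [hv]
              rw [if_pos]
              exact ⟨h1, ⟨0, h2⟩, h3⟩
            rw [hins, hvS, if_neg, sub_self]
            simp only [hcond]
            rintro ⟨-, hno, -⟩
            exact hno h2
          · have hvS : v S = 0 := by
              simp only [hv]
              rw [if_neg]
              rintro ⟨-, ⟨b, hb⟩, -⟩
              have hb01 : b = 0 ∨ b = 1 := by omega
              rcases hb01 with rfl | rfl
              · exact h2 hb
              · exact histarS hb
            rw [hins, hvS, if_pos, sub_zero]
            exact ⟨h1, h2, h3⟩
        · have h3' : ¬ ∃ c : Fin k, Sum.inr (Sum.inr c) ∈ insert istar S := by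
            rintro ⟨c, hc⟩
            rcases Finset.mem_insert.1 hc with h | h
            · simp [histar] at h
            · exact h3 ⟨c, h⟩
          have e1 : v (insert istar S) = 0 := by
            simp only [hv]; rw [if_neg]; rintro ⟨-, -, h⟩; exact h3' h
          have e2 : v S = 0 := by
            simp only [hv]; rw [if_neg]; rintro ⟨-, -, h⟩
            exact h3 h
          rw [e1, e2, sub_self, if_neg]
          simp only [hcond]
          rintro ⟨-, -, h⟩; exact h3 h
      · have h1' : ¬ ∀ x : Fin a, Sum.inl x ∈ insert istar S := by
          intro h
          apply h1
          intro x
          rcases Finset.mem_insert.1 (h x) with h' | h'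
          · simp [histar] at h'
          · exact h'
        have e1 : v (insert istar S) = 0 := by
          simp only [hv]; rw [if_neg]; rintro ⟨h, -, -⟩; exact h1' h
        have e2 : v S = 0 := by
          simp only [hv]; rw [if_neg]; rintro ⟨h, -, -⟩; exact h1 h
        rw [e1, e2, sub_self, if_neg]
        simp only [hcond]
        rintro ⟨h, -, -⟩; exact h1 h
    rw [hdiff]
    split
    · rfl
    · rw [mul_zero]
  rw [shapley, Finset.sum_congr rfl step1, ← Finset.sum_filter]
  -- Step 2: the filtered powerset is the image of nonempty subsets of Fin k
  have hmemg : ∀ (T : Finset (Fin k)) (c : Fin k), Sum.inr (Sum.inr c) ∈ g T ↔ c ∈ T := by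
    intro T c
    simp [hg, hA]
  have himg : (((Finset.univ : Finset α).erase istar).powerset.filter cond)
      = ((Finset.univ : Finset (Fin k)).powerset.filter Finset.Nonempty).image g := by
    ext S
    simp only [Finset.mem_filter, Finset.mem_image, Finset.mem_powerset]
    constructor
    · rintro ⟨hsub, h1, h2, c0, hc0⟩
      refine ⟨(Finset.univ : Finset (Fin k)).filter (fun c => Sum.inr (Sum.inr c) ∈ S),
        ⟨Finset.subset_univ _, ⟨c0, Finset.mem_filter.2 ⟨Finset.mem_univ _, hc0⟩⟩⟩, ?_⟩
      ext x
      cases x with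
      | inl y =>
        have hmA : Sum.inl y ∈ g ((Finset.univ : Finset (Fin k)).filter
            (fun c => Sum.inr (Sum.inr c) ∈ S)) :=
          Finset.mem_union_left _ (by simp [hA])
        exact iff_of_true hmA (h1 y)
      | inr z =>
        cases z with
        | inl b =>
          have hnot : (Sum.inr (Sum.inl b) : α) ∉ g ((Finset.univ : Finset (Fin k)).filter
              (fun c => Sum.inr (Sum.inr c) ∈ S)) := by
            simp [hg, hA]
          have hnotS : (Sum.inr (Sum.inl b) : α) ∉ S := by
            intro hbS
            have hb01 : b = 0 ∨ b = 1 := by omega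
            rcases hb01 with rfl | rfl
            · exact h2 hbS
            · exact (Finset.mem_erase.1 (hsub hbS)).1 rfl
          exact iff_of_false hnot hnotS
        | inr c =>
          rw [hmemg, Finset.mem_filter]
          simp
    · rintro ⟨T, ⟨-, hTne⟩, rfl⟩
      refine ⟨?_, ?_, ?_, ?_⟩
      · intro x hx
        rw [Finset.mem_erase]
        refine ⟨?_, Finset.mem_univ _⟩
        rcases Finset.mem_union.1 hx with h | h
        · simp only [hA, Finset.mem_image] at h
          obtain ⟨y, -, rfl⟩ := h
          simp [histar]
        · simp only [Finset.mem_image] at h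
          obtain ⟨c, -, rfl⟩ := h
          rw [histar]
          intro h'
          exact Sum.inl_ne_inr (Sum.inr_injective h').symm
      · intro x
        exact Finset.mem_union_left _ (by simp [hA])
      · intro hmem
        rcases Finset.mem_union.1 hmem with h | h
        · simp [hA] at h
        · simp at h
      · obtain ⟨c, hc⟩ := hTne
        exact ⟨c, Finset.mem_union_right _ (Finset.mem_image_of_mem _ hc)⟩
  rw [himg]
  have hginj : ∀ T ∈ ((Finset.univ : Finset (Fin k)).powerset.filter Finset.Nonempty),
      ∀ T' ∈ ((Finset.univ : Finset (Fin k)).powerset.filter Finset.Nonempty),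
      g T = g T' → T = T' := by
    intro T _ T' _ h
    ext c
    rw [← hmemg T c, h, hmemg]
  rw [Finset.sum_image hginj]
  -- Step 3: cardinalities
  have hcardg : ∀ T : Finset (Fin k), (g T).card = a + T.card := by
    intro T
    rw [hg]
    simp only
    rw [Finset.card_union_of_disjoint]
    · rw [hA, Finset.card_image_of_injective _ Sum.inl_injective, Finset.card_univ,
        Fintype.card_fin, Finset.card_image_of_injective]
      exact fun x y hxy => Sum.inr_injective (Sum.inr_injective hxy)
    · rw [Finset.disjoint_left]
      intro x hx hx'
      simp only [hA, Finset.mem_image] at hx hx'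
      obtain ⟨y, -, rfl⟩ := hx
      obtain ⟨c, -, hc⟩ := hx'
      exact Sum.inl_ne_inr hc.symm
  -- Step 4: group by cardinality
  set D : ℝ := ((a+k+2).factorial : ℝ) with hD
  set F : ℕ → ℝ := fun t => (((a+t).factorial * (k+1-t).factorial : ℕ) : ℝ) / D * p with hF
  have hterm : ∀ T ∈ (Finset.univ : Finset (Fin k)).powerset.filter Finset.Nonempty,
      (((g T).card.factorial * ((Finset.univ : Finset α).card - (g T).card - 1).factorial : ℕ) : ℝ)
        / ((Finset.univ : Finset α).card.factorial : ℝ) * p = F T.card := by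
    intro T hT
    rw [hcardg, hNcard]
    have hTk : T.card ≤ k := by
      simpa using Finset.card_le_univ T
    have he : a + k + 2 - (a + T.card) - 1 = k + 1 - T.card := by omega
    rw [he, hF]
  rw [Finset.sum_congr rfl hterm, Finset.sum_filter]
  set G : ℕ → ℝ := fun t => if t = 0 then 0 else F t with hG
  have hGF : ∀ T ∈ (Finset.univ : Finset (Fin k)).powerset,
      (if T.Nonempty then F T.card else 0) = G T.card := by
    intro T _
    by_cases h : T.Nonempty
    · rw [if_pos h, hG]
      simp only
      rw [if_neg]
      exact Nat.pos_iff_ne_zero.1 (Finset.card_pos.2 h)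
    · rw [if_neg h, hG]
      simp only
      rw [Finset.not_nonempty_iff_eq_empty] at h
      rw [if_pos]
      simp [h]
  rw [Finset.sum_congr rfl hGF, Finset.sum_powerset_apply_card G]
  simp only [Finset.card_univ, Fintype.card_fin]
  rw [Finset.sum_range_succ' (fun j => (k.choose j) • G j) k]
  simp only [Nat.choose_zero_right]
  have hG0 : G 0 = 0 := by simp [hG]
  rw [hG0, smul_zero, add_zero]
  have hGsucc : ∀ l ∈ Finset.range k, (k.choose (l+1)) • G (l+1)
      = ((k.choose (l+1) * ((a+l+1).factorial * (k-l).factorial) : ℕ) : ℝ) / D * p := by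
    intro l hl
    rw [hG]
    simp only
    rw [if_neg (Nat.succ_ne_zero l), hF]
    simp only
    have he : k + 1 - (l+1) = k - l := by omega
    rw [he, nsmul_eq_mul]
    push_cast
    ring
  rw [Finset.sum_congr rfl hGsucc]
  -- Step 5: the combinatorial identity
  set N : ℕ := ∑ l ∈ Finset.range k, k.choose (l+1) * ((a+l+1).factorial * (k-l).factorial)
    with hN
  have hsum : ∑ l ∈ Finset.range k,
      ((k.choose (l+1) * ((a+l+1).factorial * (k-l).factorial) : ℕ) : ℝ) / D * p
      = (N : ℝ) / D * p := by
    rw [hN, Nat.cast_sum, Finset.sum_div, Finset.sum_mul]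
  rw [hsum]
  have hI := identI k a 1
  have hsplit : ∑ j ∈ Finset.range (k+1), k.choose j * ((a+j).factorial * (1+k-j).factorial)
      = N + a.factorial * (k+1).factorial := by
    rw [Finset.sum_range_succ' (fun j => k.choose j * ((a+j).factorial * (1+k-j).factorial)) k]
    congr 1
    · rw [hN]
      apply Finset.sum_congr rfl
      intro l hl
      have he : 1 + k - (l+1) = k - l := by omega
      rw [he]
      rfl
    · simp only [Nat.choose_zero_right, one_mul, Nat.add_zero, Nat.sub_zero]
      rw [Nat.add_comm 1 k]
  rw [hsplit, show a+1+1 = a+2 by omega, show a+1+k+1 = a+k+2 by omega, Nat.factorial_one,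
    Nat.mul_one] at hI
  have hIr : ((a+2).factorial : ℝ) * ((N:ℝ) + (a.factorial : ℝ) * ((k+1).factorial : ℝ))
      = ((a+k+2).factorial : ℝ) * (a.factorial : ℝ) := by
    exact_mod_cast congrArg (fun n : ℕ => (n : ℝ)) hI
  -- rewrite the RHS sum using the telescoping lemma
  have hRHS : ∑ l ∈ Finset.range k,
      (((l+1).factorial * (a+1).factorial : ℕ) : ℝ) / ((a+2+l+1).factorial : ℝ)
      = (a.factorial : ℝ) / ((a+2).factorial : ℝ)
        - ((k+1).factorial : ℝ) * (a.factorial : ℝ) / ((a+k+2).factorial : ℝ) := by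
    rw [← telesc a k]
    apply Finset.sum_congr rfl
    intro l hl
    have he : a+2+l+1 = a+l+3 := by omega
    rw [he]
    push_cast
    ring
  rw [hRHS]
  have hne1 : ((a+k+2).factorial : ℝ) ≠ 0 := Nat.cast_ne_zero.2 (Nat.factorial_ne_zero _)
  have hne2 : ((a+2).factorial : ℝ) ≠ 0 := Nat.cast_ne_zero.2 (Nat.factorial_ne_zero _)
  have hNval : (N:ℝ) = ((a+k+2).factorial : ℝ) * (a.factorial : ℝ) / ((a+2).factorial : ℝ)
      - (a.factorial : ℝ) * ((k+1).factorial : ℝ) := by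
    field_simp
    linear_combination hIr
  rw [hNval, hD]
  field_simp

/-- Base game: `m-1` singleton task players (`Sum.inl`) plus two identical players `i, i*`
(`Sum.inr 0, Sum.inr 1`) for task `τ_i`; a coalition is worth `p` iff it contains all
singleton players and at least one of `{i, i*}`.  Then `φ_i = φ_{i*} = p/((m+1)m)`.
Extended game: `m-2` singleton players (`Sum.inl`), two identical players `{i, i*}` for
`τ_i` (`Sum.inr (Sum.inl ·)`), and `k` identical players for another task `τ_j`
(`Sum.inr (Sum.inr ·)`); then `φ_{i*} = p · Σ_{l=1}^{k} l!(m-1)!/(m+l)!`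
(written below with the index shifted). -/
theorem shapley_dummy_copy_value (m k : ℕ) (hm : 2 ≤ m) (hk : 1 ≤ k) (p : ℝ) :
    (let v₁ : Finset (Fin (m - 1) ⊕ Fin 2) → ℝ :=
      fun S => if (∀ a : Fin (m - 1), Sum.inl a ∈ S) ∧ (∃ b : Fin 2, Sum.inr b ∈ S)
               then p else 0
     ∀ b : Fin 2, shapley Finset.univ v₁ (Sum.inr b) = p / ((m + 1) * m)) ∧
    (let v₂ : Finset (Fin (m - 2) ⊕ (Fin 2 ⊕ Fin k)) → ℝ :=
      fun S => if (∀ a : Fin (m - 2), Sum.inl a ∈ S) ∧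
                  (∃ b : Fin 2, Sum.inr (Sum.inl b) ∈ S) ∧
                  (∃ c : Fin k, Sum.inr (Sum.inr c) ∈ S)
               then p else 0
     shapley Finset.univ v₂ (Sum.inr (Sum.inl 1)) =
       p * ∑ l ∈ Finset.range k,
         (((l + 1).factorial * (m - 1).factorial : ℕ) : ℝ) / ((m + l + 1).factorial : ℝ)) := by
  obtain ⟨a, rfl⟩ : ∃ a, m = a + 2 := ⟨m - 2, by omega⟩
  refine ⟨?_, ?_⟩
  · exact fun b => (part1 a p b).trans (by push_cast; ring_nf)
  · exact (part2 a k hk p).trans (by norm_num)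
end
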